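/- Let Σ be a unimodular fan. For every p > 0, the tropical homology group H_{p,0}(Σ̄, ℤ) of the canonical compactification of Σ vanishes. -/

import Mathlib

open scoped DirectSum NNReal

abbrev NZ (n : ℕ) := Fin n → ℤ
abbrev NR (n : ℕ) := Fin n → ℝ

/-- The canonical map from the lattice `ℤⁿ` into `ℝⁿ`. -/
def latt {n : ℕ} (v : NZ n) : NR n := fun j => (v j : ℝ)

/-- A unimodular (rational, simplicial) fan, encoded combinatorially:
rays are indexed by `R` with primitive generators `e r` in the lattice `ℤⁿ`,
and cones correspond to those finite sets of rays belonging to `faces`. -/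
structure UFan (n : ℕ) where
  R : Type
  fintypeR : Fintype R
  deceqR : DecidableEq R
  e : R → NZ n
  faces : Finset (Finset R)
  empty_mem : ∅ ∈ faces
  down_closed : ∀ S ∈ faces, ∀ T ⊆ S, T ∈ faces
  /-- the primitive generators of the rays of every cone extend to a
  `ℤ`-basis of the lattice -/
  unimodular : ∀ S ∈ faces, ∃ b : Module.Basis (Fin n) ℤ (NZ n), ∃ f : {r // r ∈ S} → Fin n,
      Function.Injective f ∧ ∀ r : {r // r ∈ S}, b (f r) = e r
  /-- the geometric cones of the family intersect along common faces -/
  isFan : ∀ S ∈ faces, ∀ T ∈ faces,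
      (Submodule.span ℝ≥0 (latt '' (e '' (S : Set R))) ⊓
        Submodule.span ℝ≥0 (latt '' (e '' (T : Set R))))
        = Submodule.span ℝ≥0 (latt '' (e '' ((S ∩ T : Finset R) : Set R)))

attribute [instance] UFan.fintypeR UFan.deceqR

namespace UFan

variable {n : ℕ} (Φ : UFan n)

/-- The sublattice `N_σ` generated by the rays of a cone `σ`. -/
def Nsub (S : Finset Φ.R) : Submodule ℤ (NZ n) :=
  Submodule.span ℤ (Φ.e '' (S : Set Φ.R))

/-- The quotient lattice `N^τ = N / N_τ`. -/
abbrev Q (T : Finset Φ.R) := NZ n ⧸ Φ.Nsub T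

/-- The projection `N → N^τ`. -/
def qmap (T : Finset Φ.R) : NZ n →ₗ[ℤ] Φ.Q T := (Φ.Nsub T).mkQ

lemma Nsub_mono {T T' : Finset Φ.R} (h : T ⊆ T') : Φ.Nsub T ≤ Φ.Nsub T' :=
  Submodule.span_mono (Set.image_mono (Finset.coe_subset.2 h))

/-- The projection `N^τ → N^τ'` for `τ ⊆ τ'`. -/
def proj {T T' : Finset Φ.R} (h : T ⊆ T') : Φ.Q T →ₗ[ℤ] Φ.Q T' :=
  Submodule.mapQ _ _ LinearMap.id
    (by simpa using Φ.Nsub_mono h)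

/-- The map on exterior algebras induced by the projection `N^τ → N^τ'`. -/
def emap {T T' : Finset Φ.R} (h : T ⊆ T') :
    ExteriorAlgebra ℤ (Φ.Q T) →ₗ[ℤ] ExteriorAlgebra ℤ (Φ.Q T') :=
  (ExteriorAlgebra.map (Φ.proj h)).toLinearMap

/-- The multi-tangent space `F_p(□_σ^τ)`: the sum over cones `η ⊇ σ` of the
images of `⋀^p N_η` inside the exterior algebra of `N^τ`. -/
def Fmod (p : ℕ) (T S : Finset Φ.R) : Submodule ℤ (ExteriorAlgebra ℤ (Φ.Q T)) :=
  ⨆ (S' : Finset Φ.R) (_ : S' ∈ Φ.faces) (_ : S ⊆ S'),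
    Submodule.map (ExteriorAlgebra.map ((Φ.qmap T).comp (Φ.Nsub S').subtype)).toLinearMap
      (⋀[ℤ]^p ↥(Φ.Nsub S'))

/-- Faces `□_σ^τ` of dimension `q` of the canonical compactification, encoded as
pairs `(τ, σ)` of cones with `τ ⊆ σ` and `dim σ - dim τ = q`. -/
def FaceIdx (q : ℕ) :=
  {TS : Finset Φ.R × Finset Φ.R //
    TS.1 ⊆ TS.2 ∧ TS.2 ∈ Φ.faces ∧ TS.2.card = TS.1.card + q}

instance (q : ℕ) : Fintype (Φ.FaceIdx q) := by
  unfold FaceIdx; infer_instance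

instance (q : ℕ) : DecidableEq (Φ.FaceIdx q) := by
  unfold FaceIdx; infer_instance

/-- `γ` is a codimension-one face of `δ` in the canonical compactification. -/
def Adj {q : ℕ} (γ : Φ.FaceIdx q) (δ : Φ.FaceIdx (q + 1)) : Prop :=
  δ.1.1 ⊆ γ.1.1 ∧ γ.1.2 ⊆ δ.1.2

instance {q : ℕ} (γ : Φ.FaceIdx q) (δ : Φ.FaceIdx (q + 1)) : Decidable (Φ.Adj γ δ) := by
  unfold Adj; infer_instance

/-- The cellular chain group `C_{p,q}` of the canonical compactification. -/
abbrev Cch (p q : ℕ) := ⨁ δ : Φ.FaceIdx q, ↥(Φ.Fmod p δ.1.1 δ.1.2)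

end UFan

/-- Auxiliary data for the tropical (co)chain complexes of the canonical
compactification: a system of incidence signs coming from a choice of cellular
orientation, together with the component maps `F_p(δ) → F_p(γ)` (projection
followed by inclusion), characterized inside the ambient exterior algebras. -/
structure TropData {n : ℕ} (Φ : UFan n) where
  ε : ∀ q : ℕ, Φ.FaceIdx q → Φ.FaceIdx (q + 1) → ℤ
  ε_unit : ∀ q γ δ, Φ.Adj γ δ → ε q γ δ = 1 ∨ ε q γ δ = -1
  ε_zero : ∀ q γ δ, ¬ Φ.Adj γ δ → ε q γ δ = 0
  ε_rel : ∀ (q : ℕ) (γ : Φ.FaceIdx q) (δ : Φ.FaceIdx (q + 2)),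
      (∑ μ : Φ.FaceIdx (q + 1), ε q γ μ * ε (q + 1) μ δ) = 0
  imap : ∀ (p : ℕ) {q : ℕ} (γ : Φ.FaceIdx q) (δ : Φ.FaceIdx (q + 1)), Φ.Adj γ δ →
      (↥(Φ.Fmod p δ.1.1 δ.1.2) →ₗ[ℤ] ↥(Φ.Fmod p γ.1.1 γ.1.2))
  imap_spec : ∀ (p : ℕ) {q : ℕ} (γ : Φ.FaceIdx q) (δ : Φ.FaceIdx (q + 1)) (h : Φ.Adj γ δ)
      (x : ↥(Φ.Fmod p δ.1.1 δ.1.2)),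
      (imap p γ δ h x : ExteriorAlgebra ℤ (Φ.Q γ.1.1)) =
        Φ.emap h.1 (x : ExteriorAlgebra ℤ (Φ.Q δ.1.1))

namespace UFan

variable {n : ℕ} (Φ : UFan n)

/-- The cellular boundary map `C_{p,q+1} → C_{p,q}`. -/
noncomputable def bdry (td : TropData Φ) (p q : ℕ) :
    Φ.Cch p (q + 1) →ₗ[ℤ] Φ.Cch p q :=
  DirectSum.toModule ℤ _ _ fun δ =>
    ∑ γ : Φ.FaceIdx q,
      if h : Φ.Adj γ δ then
        td.ε q γ δ •
          ((DirectSum.lof ℤ (Φ.FaceIdx q) (fun γ' => ↥(Φ.Fmod p γ'.1.1 γ'.1.2)) γ).comp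
            (td.imap p γ δ h))
      else 0

/-- The cellular cochain group `C^{p,q}` of the canonical compactification. -/
abbrev Cco (p q : ℕ) := Module.Dual ℤ (Φ.Cch p q)

/-- The cellular coboundary map. -/
noncomputable def coder (td : TropData Φ) (p q : ℕ) : Φ.Cco p q →ₗ[ℤ] Φ.Cco p (q + 1) :=
  (Φ.bdry td p q).dualMap

/-- The coboundary arriving in degree `q`. -/
noncomputable def coderFrom (td : TropData Φ) (p : ℕ) :
    ∀ q : ℕ, Φ.Cco p (q - 1) →ₗ[ℤ] Φ.Cco p q
  | 0 => 0
  | (q + 1) => Φ.coder td p q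

/-- Tropical cohomology `H^{p,q}` of the canonical compactification. -/
noncomputable def Hcoh (td : TropData Φ) (p q : ℕ) :=
  ↥(LinearMap.ker (Φ.coder td p q)) ⧸
    Submodule.comap (LinearMap.ker (Φ.coder td p q)).subtype
      (LinearMap.range (Φ.coderFrom td p q))

noncomputable instance (td : TropData Φ) (p q : ℕ) : AddCommGroup (Φ.Hcoh td p q) := by
  unfold Hcoh; infer_instance

/-- The boundary leaving degree `q`. -/
noncomputable def bdryTo (td : TropData Φ) (p : ℕ) :
    ∀ q : ℕ, Φ.Cch p q →ₗ[ℤ] Φ.Cch p (q - 1)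
  | 0 => 0
  | (q + 1) => Φ.bdry td p q

/-- Tropical homology `H_{p,q}` of the canonical compactification. -/
noncomputable def Hhom (td : TropData Φ) (p q : ℕ) :=
  letI : AddCommGroup ↥(LinearMap.ker (Φ.bdryTo td p q)) :=
    @Submodule.addCommGroup ℤ (Φ.Cch p q) _ _ _ (LinearMap.ker (Φ.bdryTo td p q))
  ↥(LinearMap.ker (Φ.bdryTo td p q)) ⧸
    Submodule.comap (LinearMap.ker (Φ.bdryTo td p q)).subtype
      (LinearMap.range (Φ.bdry td p q))

noncomputable instance (td : TropData Φ) (p q : ℕ) : AddCommGroup (Φ.Hhom td p q) := by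
  unfold Hhom; infer_instance

end UFan


namespace UFan

variable {n : ℕ} {Φ : UFan n}

/-- Degree-zero faces have equal cone pair. -/
lemma faceIdx_zero_fst_eq_snd (γ : Φ.FaceIdx 0) : γ.1.1 = γ.1.2 := by
  have h : γ.1.2.card = γ.1.1.card + 0 := γ.2.2.2
  exact Finset.eq_of_subset_of_card_le γ.2.1 (by omega)

/-- The contribution of the cone `S` itself to `F_p(∞_S)` vanishes for `p > 0`. -/
lemma gen_bot (S : Finset Φ.R) {p : ℕ} (hp : 0 < p) :
    Submodule.map (ExteriorAlgebra.map ((Φ.qmap S).comp (Φ.Nsub S).subtype)).toLinearMap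
      (⋀[ℤ]^p ↥(Φ.Nsub S)) = ⊥ := by
  have h0 : (Φ.qmap S).comp (Φ.Nsub S).subtype = 0 := by
    ext x
    exact (Submodule.Quotient.mk_eq_zero _).2 x.2
  rw [h0]
  show Submodule.map _ (LinearMap.range (ExteriorAlgebra.ι ℤ) ^ p) = ⊥
  rw [Submodule.map_pow, ExteriorAlgebra.ι_range_map_map,
    LinearMap.range_zero, Submodule.map_bot, ← Submodule.zero_eq_bot, zero_pow hp.ne']

lemma emap_refl (S : Finset Φ.R) (h : S ⊆ S) (x : ExteriorAlgebra ℤ (Φ.Q S)) :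
    Φ.emap h x = x := by
  have h1 : Φ.proj h = LinearMap.id := Submodule.mapQ_id (p := Φ.Nsub S)
  show (ExteriorAlgebra.map (Φ.proj h)).toLinearMap x = x
  rw [h1, ExteriorAlgebra.map_id]
  rfl

set_option maxHeartbeats 1600000 in
/-- Key surjectivity lemma: every generator of `C_{p,0}` is a boundary. -/
lemma lof_mem_range_bdry (td : TropData Φ) {p : ℕ} (hp : 0 < p) :
    ∀ (m : ℕ) (γ : Φ.FaceIdx 0) (x : ↥(Φ.Fmod p γ.1.1 γ.1.2)),
      Fintype.card Φ.R - γ.1.1.card ≤ m →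
      DirectSum.lof ℤ (Φ.FaceIdx 0) (fun γ' => ↥(Φ.Fmod p γ'.1.1 γ'.1.2)) γ x ∈
        LinearMap.range (Φ.bdry td p 0) := by
  intro m
  induction m using Nat.strong_induction_on with
  | _ m IH =>
  rintro ⟨⟨S, T⟩, hTS, hSf, hcard⟩ x hm
  have hcard' : T.card = S.card + 0 := hcard
  obtain rfl : S = T := Finset.eq_of_subset_of_card_le hTS (by omega)
  have hm' : Fintype.card Φ.R - S.card ≤ m := hm
  obtain ⟨z, hz⟩ := x
  have hz' : z ∈ ⨆ (S' : Finset Φ.R), ⨆ (_ : S' ∈ Φ.faces), ⨆ (_ : S ⊆ S'),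
      Submodule.map (ExteriorAlgebra.map ((Φ.qmap S).comp (Φ.Nsub S').subtype)).toLinearMap
        (⋀[ℤ]^p ↥(Φ.Nsub S')) := hz
  have main : z ∈ Φ.Fmod p (S, S).1 (S, S).2 ∧
      ∀ hw' : z ∈ Φ.Fmod p (S, S).1 (S, S).2,
      DirectSum.lof ℤ (Φ.FaceIdx 0) (fun γ' => ↥(Φ.Fmod p γ'.1.1 γ'.1.2))
          ⟨(S, S), hTS, hSf, hcard⟩ ⟨z, hw'⟩ ∈
        LinearMap.range (Φ.bdry td p 0) := by
    refine Submodule.iSup_induction (x := z) _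
      (motive := fun w => w ∈ Φ.Fmod p (S, S).1 (S, S).2 ∧
        ∀ hw' : w ∈ Φ.Fmod p (S, S).1 (S, S).2,
        DirectSum.lof ℤ (Φ.FaceIdx 0) (fun γ' => ↥(Φ.Fmod p γ'.1.1 γ'.1.2))
            ⟨(S, S), hTS, hSf, hcard⟩ ⟨w, hw'⟩ ∈
          LinearMap.range (Φ.bdry td p 0))
      hz' ?_ ?_ ?_
    · -- generator case
      intro S' w hw
      by_cases h1 : S' ∈ Φ.faces
      swap
      · simp only [iSup_neg h1, Submodule.mem_bot] at hw
        subst hw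
        refine ⟨Submodule.zero_mem _, fun hw' => ?_⟩
        rw [show (⟨0, hw'⟩ : ↥(Φ.Fmod p (S, S).1 (S, S).2)) = 0 from rfl, map_zero]
        exact zero_mem _
      by_cases h2 : S ⊆ S'
      swap
      · simp only [iSup_pos h1, iSup_neg h2, Submodule.mem_bot] at hw
        subst hw
        refine ⟨Submodule.zero_mem _, fun hw' => ?_⟩
        rw [show (⟨0, hw'⟩ : ↥(Φ.Fmod p (S, S).1 (S, S).2)) = 0 from rfl, map_zero]
        exact zero_mem _
      simp only [iSup_pos h1, iSup_pos h2] at hw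
      by_cases hS'S : S' = S
      · rw [hS'S, gen_bot S hp, Submodule.mem_bot] at hw
        subst hw
        refine ⟨Submodule.zero_mem _, fun hw' => ?_⟩
        rw [show (⟨0, hw'⟩ : ↥(Φ.Fmod p (S, S).1 (S, S).2)) = 0 from rfl, map_zero]
        exact zero_mem _
      -- now S ⊊ S': pick r ∈ S' \ S
      have hss : S ⊂ S' := h2.ssubset_of_ne (Ne.symm hS'S)
      obtain ⟨r, hrS', hrS⟩ := Finset.exists_of_ssubset hss
      have hS''sub : insert r S ⊆ S' := Finset.insert_subset hrS' h2
      have hS''f : insert r S ∈ Φ.faces := Φ.down_closed S' h1 _ hS''sub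
      have hScard : (insert r S).card = S.card + 1 := Finset.card_insert_of_notMem hrS
      have hS''le : (insert r S).card ≤ Fintype.card Φ.R := Finset.card_le_univ _
      set γ : Φ.FaceIdx 0 := ⟨(S, S), hTS, hSf, hcard⟩ with hγdef
      set δ : Φ.FaceIdx 1 :=
        ⟨(S, insert r S), Finset.subset_insert r S, hS''f, hScard⟩ with hδdef
      set γ'' : Φ.FaceIdx 0 :=
        ⟨(insert r S, insert r S), Finset.Subset.refl _, hS''f, rfl⟩ with hγ''def
      have hAdjγ : Φ.Adj γ δ := ⟨Finset.Subset.refl S, Finset.subset_insert r S⟩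
      have hAdjγ'' : Φ.Adj γ'' δ := ⟨Finset.subset_insert r S, Finset.Subset.refl _⟩
      have hγne : γ ≠ γ'' := by
        intro hcontra
        have h5 : S = insert r S := congrArg (fun c => c.1.1) hcontra
        exact hrS (h5 ▸ Finset.mem_insert_self r S)
      have hwmem : w ∈ Φ.Fmod p S (insert r S) :=
        Submodule.mem_iSup_of_mem S' (Submodule.mem_iSup_of_mem h1
          (Submodule.mem_iSup_of_mem hS''sub hw))
      refine ⟨Submodule.mem_iSup_of_mem S' (Submodule.mem_iSup_of_mem h1
        (Submodule.mem_iSup_of_mem h2 hw)), fun hw' => ?_⟩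
      set y : ↥(Φ.Fmod p δ.1.1 δ.1.2) := ⟨w, hwmem⟩ with hydef
      -- compute the boundary of lof δ y
      have hB : Φ.bdry td p 0 (DirectSum.lof ℤ (Φ.FaceIdx 1)
            (fun δ' => ↥(Φ.Fmod p δ'.1.1 δ'.1.2)) δ y) =
          td.ε 0 γ δ • DirectSum.lof ℤ (Φ.FaceIdx 0)
              (fun γ0 => ↥(Φ.Fmod p γ0.1.1 γ0.1.2)) γ (td.imap p γ δ hAdjγ y) +
            td.ε 0 γ'' δ • DirectSum.lof ℤ (Φ.FaceIdx 0)
              (fun γ0 => ↥(Φ.Fmod p γ0.1.1 γ0.1.2)) γ'' (td.imap p γ'' δ hAdjγ'' y) := by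
        unfold bdry
        rw [DirectSum.toModule_lof, LinearMap.sum_apply]
        have hvanish : ∀ c ∈ (Finset.univ : Finset (Φ.FaceIdx 0)),
            c ∉ ({γ, γ''} : Finset (Φ.FaceIdx 0)) →
            (if h : Φ.Adj c δ then
              td.ε 0 c δ •
                ((DirectSum.lof ℤ (Φ.FaceIdx 0) (fun γ0 => ↥(Φ.Fmod p γ0.1.1 γ0.1.2)) c).comp
                  (td.imap p c δ h))
            else 0) y = 0 := by
          intro c _ hc
          simp only [Finset.mem_insert, Finset.mem_singleton, not_or] at hc
          have hna : ¬ Φ.Adj c δ := by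
            intro hA
            have hcc : c.1.1 = c.1.2 := faceIdx_zero_fst_eq_snd c
            have h3 : S ⊆ c.1.1 := hA.1
            have h4 : c.1.2 ⊆ insert r S := hA.2
            by_cases hrc : r ∈ c.1.1
            · apply hc.2
              have h6 : c.1.1 = insert r S := Finset.Subset.antisymm (hcc ▸ h4)
                (Finset.insert_subset hrc h3)
              exact Subtype.ext (Prod.ext h6 (hcc ▸ h6))
            · apply hc.1
              have h5 : c.1.1 ⊆ S := by
                intro a ha
                rcases Finset.mem_insert.1 (h4 (hcc ▸ ha)) with h | h
                · exact absurd (h ▸ ha) hrc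
                · exact h
              have h6 : c.1.1 = S := Finset.Subset.antisymm h5 h3
              exact Subtype.ext (Prod.ext h6 (hcc ▸ h6))
          rw [dif_neg hna, LinearMap.zero_apply]
        rw [← Finset.sum_subset (Finset.subset_univ ({γ, γ''} : Finset (Φ.FaceIdx 0))) hvanish]
        rw [Finset.sum_pair hγne, dif_pos hAdjγ, dif_pos hAdjγ'']
        simp only [LinearMap.smul_apply, LinearMap.coe_comp, Function.comp_apply]
      have himap : td.imap p γ δ hAdjγ y = ⟨w, hw'⟩ := by
        apply Subtype.ext
        rw [td.imap_spec p γ δ hAdjγ y]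
        exact emap_refl S hAdjγ.1 w
      have hγ''mem : DirectSum.lof ℤ (Φ.FaceIdx 0) (fun γ0 => ↥(Φ.Fmod p γ0.1.1 γ0.1.2)) γ''
          (td.imap p γ'' δ hAdjγ'' y) ∈ LinearMap.range (Φ.bdry td p 0) := by
        exact IH (m - 1) (by omega) γ'' (td.imap p γ'' δ hAdjγ'' y)
          (by simp only [hγ''def]; omega)
      have hεw : td.ε 0 γ δ • DirectSum.lof ℤ (Φ.FaceIdx 0)
          (fun γ0 => ↥(Φ.Fmod p γ0.1.1 γ0.1.2)) γ ⟨w, hw'⟩ ∈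
          LinearMap.range (Φ.bdry td p 0) := by
        rw [← himap]
        have heq : td.ε 0 γ δ • DirectSum.lof ℤ (Φ.FaceIdx 0)
            (fun γ0 => ↥(Φ.Fmod p γ0.1.1 γ0.1.2)) γ (td.imap p γ δ hAdjγ y) =
            Φ.bdry td p 0 (DirectSum.lof ℤ (Φ.FaceIdx 1)
              (fun δ' => ↥(Φ.Fmod p δ'.1.1 δ'.1.2)) δ y) -
            td.ε 0 γ'' δ • DirectSum.lof ℤ (Φ.FaceIdx 0)
              (fun γ0 => ↥(Φ.Fmod p γ0.1.1 γ0.1.2)) γ'' (td.imap p γ'' δ hAdjγ'' y) := by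
          rw [hB]; abel
        rw [heq]
        obtain ⟨z, hz⟩ := LinearMap.mem_range.1 hγ''mem
        exact LinearMap.mem_range.2 ⟨DirectSum.lof ℤ (Φ.FaceIdx 1)
          (fun δ' => ↥(Φ.Fmod p δ'.1.1 δ'.1.2)) δ y - td.ε 0 γ'' δ • z, by rw [map_sub, map_smul, hz]⟩
      rcases td.ε_unit 0 γ δ hAdjγ with hε | hε
      · rw [hε, one_smul] at hεw
        exact hεw
      · rw [hε, neg_one_smul] at hεw
        obtain ⟨z, hz⟩ := LinearMap.mem_range.1 hεw
        refine LinearMap.mem_range.2 ⟨-z, ?_⟩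
        rw [map_neg, hz]
        exact neg_neg (DirectSum.lof ℤ (Φ.FaceIdx 0) (fun γ0 => ↥(Φ.Fmod p γ0.1.1 γ0.1.2)) γ ⟨w, hw'⟩)
    · -- zero case
      refine ⟨Submodule.zero_mem _, fun hw' => ?_⟩
      rw [show (⟨0, hw'⟩ : ↥(Φ.Fmod p (S, S).1 (S, S).2)) = 0 from rfl, map_zero]
      exact zero_mem _
    · -- add case
      rintro z₁ z₂ ⟨hz₁, hC₁⟩ ⟨hz₂, hC₂⟩
      refine ⟨Submodule.add_mem _ hz₁ hz₂, fun hw' => ?_⟩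
      rw [show (⟨z₁ + z₂, hw'⟩ : ↥(Φ.Fmod p (S, S).1 (S, S).2)) = ⟨z₁, hz₁⟩ + ⟨z₂, hz₂⟩
        from rfl, map_add]
      exact Submodule.add_mem _ (hC₁ hz₁) (hC₂ hz₂)
  exact main.2 hz

lemma range_bdry_eq_top (td : TropData Φ) {p : ℕ} (hp : 0 < p) :
    LinearMap.range (Φ.bdry td p 0) = ⊤ := by
  rw [Submodule.eq_top_iff']
  intro x
  induction x using DirectSum.induction_on with
  | zero => exact zero_mem _
  | of γ w =>
    rw [← DirectSum.lof_eq_of ℤ]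
    exact lof_mem_range_bdry td hp (Fintype.card Φ.R) γ w (by omega)
  | add x y hx hy => exact Submodule.add_mem _ hx hy

end UFan

/-- for a unimodular fan `Φ` and every `p > 0`, the tropical homology
group `H_{p,0}(Φ̄, ℤ)` of the canonical compactification vanishes (for any choice of
cellular orientation data `td`). -/
theorem homology_vanishing_degree_zero {n : ℕ} (Φ : UFan n) (td : TropData Φ)
    (p : ℕ) (hp : 0 < p) : Subsingleton (Φ.Hhom td p 0) := by
  unfold UFan.Hhom
  refine (@Submodule.Quotient.subsingleton_iff ℤ _ _ (@Submodule.addCommGroup ℤ (Φ.Cch p 0) _ _ _ _) _ _).2 ?_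
  rw [Submodule.comap_subtype_eq_top,
    UFan.range_bdry_eq_top td hp]
  exact le_top
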